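/- Let C = FLRS[γ, a, h; N, k] be a folded linearized Reed–Solomon code with the same folding parameter h for all ℓ blocks, folded block lengths N_1, ..., N_ℓ summing to N, and dimension k ≤ hN. Assume h divides k. Then the minimum sum-rank distance of C equals N − k/h + 1, i.e., C is a maximum sum-rank distance (MSRD) code. -/

import Mathlib

/-- Iterated generalized operator `D_a^r(b)` for zero derivation: `D_a(b) = σ(b)·a`. -/
def Dit {F : Type*} [Field F] (σ : F ≃+* F) (a b : F) : ℕ → F
  | 0 => b
  | r + 1 => σ (Dit σ a b r) * a

/-- Generalized operator evaluation of a skew polynomial at `b` w.r.t. parameter `a`. -/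
noncomputable def opev {F : Type*} [Field F] (σ : F ≃+* F) (f : Polynomial F)
    (a b : F) : F :=
  ∑ r ∈ f.support, f.coeff r * Dit σ a b r

/-- The fixed subfield `F_q` of the automorphism `σ`. -/
def fixedSubfield {F : Type*} [Field F] (σ : F ≃+* F) : Subfield F where
  carrier := {x | σ x = x}
  mul_mem' := by
    intro a b (ha : σ a = a) (hb : σ b = b)
    show σ (a * b) = a * b
    rw [map_mul, ha, hb]
  one_mem' := by show σ 1 = 1; simp
  add_mem' := by
    intro a b (ha : σ a = a) (hb : σ b = b)
    show σ (a + b) = a + b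
    rw [map_add, ha, hb]
  zero_mem' := by show σ 0 = 0; simp
  neg_mem' := by
    intro a (ha : σ a = a)
    show σ (-a) = -a
    rw [map_neg, ha]
  inv_mem' := by
    intro a (ha : σ a = a)
    show σ a⁻¹ = a⁻¹
    rw [map_inv₀, ha]

/-- The `F_q`-rank of a matrix over `F_{q^m}`: the dimension over the fixed subfield
of the span of its columns. -/
noncomputable def colRank {F : Type*} [Field F] (σ : F ≃+* F) {h N : ℕ}
    (M : Matrix (Fin h) (Fin N) F) : ℕ :=
  Module.finrank (fixedSubfield σ)
    (Submodule.span (fixedSubfield σ) (Set.range fun j : Fin N => fun r : Fin h => M r j))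

set_option maxHeartbeats 1000000
set_option synthInstance.maxHeartbeats 400000
set_option linter.unusedSectionVars false
set_option linter.unusedVariables false

namespace FLRSAux
variable {F : Type*} [Field F] (σ : F ≃+* F)

lemma dit_succ (a b : F) (r : ℕ) : Dit σ a b (r+1) = σ (Dit σ a b r) * a := rfl

lemma dit_zero (a : F) (r : ℕ) : Dit σ a 0 r = 0 := by
  induction r with
  | zero => rfl
  | succ r ih => rw [dit_succ, ih, map_zero, zero_mul]

lemma dit_add (a x y : F) (r : ℕ) : Dit σ a (x + y) r = Dit σ a x r + Dit σ a y r := by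
  induction r with
  | zero => rfl
  | succ r ih => rw [dit_succ, ih, map_add, add_mul]; rfl

lemma dit_smul (a : F) (c : fixedSubfield σ) (x : F) (r : ℕ) :
    Dit σ a ((c : F) * x) r = (c : F) * Dit σ a x r := by
  induction r with
  | zero => rfl
  | succ r ih =>
    have hc : σ (c : F) = c := c.2
    rw [dit_succ, ih, map_mul, hc, dit_succ, mul_assoc]

noncomputable def evL (n : ℕ) (f : ℕ → F) (A : F) : F →ₗ[fixedSubfield σ] F where
  toFun b := ∑ r ∈ Finset.range n, f r * Dit σ A b r
  map_add' x y := by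
    simp only [dit_add, mul_add]
    rw [Finset.sum_add_distrib]
  map_smul' c x := by
    have h1 : ∀ b : F, c • b = (c : F) * b := fun _ => rfl
    simp only [RingHom.id_apply, h1]
    rw [Finset.mul_sum]
    refine Finset.sum_congr rfl fun r _ => ?_
    rw [dit_smul]; ring

@[simp] lemma evL_apply (n : ℕ) (f : ℕ → F) (A b : F) :
    evL σ n f A b = ∑ r ∈ Finset.range n, f r * Dit σ A b r := rfl

noncomputable def Tmap (c A : F) : F →ₗ[fixedSubfield σ] F where
  toFun b := σ b * A - c * b
  map_add' x y := by rw [map_add]; ring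
  map_smul' q x := by
    have h1 : ∀ b : F, q • b = (q : F) * b := fun _ => rfl
    have hq : σ (q : F) = q := q.2
    simp only [RingHom.id_apply, h1, map_mul, hq]; ring

@[simp] lemma Tmap_apply (c A b : F) : Tmap σ c A b = σ b * A - c * b := rfl

lemma dit_T (A c b : F) (s : ℕ) :
    Dit σ A (σ b * A - c * b) s = Dit σ A b (s+1) - (⇑σ)^[s] c * Dit σ A b s := by
  induction s with
  | zero => simp [Dit]
  | succ s ih =>
    rw [dit_succ, ih]
    calc σ (Dit σ A b (s+1) - (⇑σ)^[s] c * Dit σ A b s) * A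
        = σ (Dit σ A b (s+1)) * A - σ ((⇑σ)^[s] c) * (σ (Dit σ A b s) * A) := by
          rw [map_sub, map_mul]; ring
      _ = Dit σ A b (s+2) - (⇑σ)^[s+1] c * Dit σ A b (s+1) := by
          rw [Function.iterate_succ_apply', ← dit_succ, ← dit_succ]
noncomputable def quot (f : ℕ → F) (c : F) (d : ℕ) (s : ℕ) : F :=
  ∑ j ∈ Finset.range (d+1), f (s+1+j) * ∏ t ∈ Finset.range j, (⇑σ)^[s+1+t] c

lemma quot_supp (f : ℕ → F) (c : F) (d : ℕ) (hf : ∀ r, d+1 < r → f r = 0)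
    {s : ℕ} (hs : d < s) : quot σ f c d s = 0 := by
  unfold quot
  apply Finset.sum_eq_zero
  intro j hj
  rw [hf _ (by omega), zero_mul]

lemma quot_top (f : ℕ → F) (c : F) (d : ℕ) (hf : ∀ r, d+1 < r → f r = 0) :
    quot σ f c d d = f (d+1) := by
  unfold quot
  rw [Finset.sum_eq_single 0]
  · simp
  · intro j hj hj0
    rw [hf _ (by omega), zero_mul]
  · intro hn
    exact absurd (Finset.mem_range.2 (by omega)) hn

lemma quot_rec (f : ℕ → F) (c : F) (d : ℕ) (hf : ∀ r, d+1 < r → f r = 0) (s : ℕ) :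
    quot σ f c d s = f (s+1) + (⇑σ)^[s+1] c * quot σ f c d (s+1) := by
  unfold quot
  rw [Finset.sum_range_succ']
  simp only [add_zero, Finset.range_zero, Finset.prod_empty, mul_one]
  rw [add_comm]
  congr 1
  rw [Finset.mul_sum]
  rw [Finset.sum_range_succ, hf (s+1+1+d) (by omega), zero_mul, mul_zero, add_zero]
  refine Finset.sum_congr rfl fun j hj => ?_
  rw [Finset.prod_range_succ']
  have h2 : s + 1 + (j+1) = s + 1 + 1 + j := by omega
  have h3 : ∏ t ∈ Finset.range j, (⇑σ)^[s+1+(t+1)] c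
      = ∏ t ∈ Finset.range j, (⇑σ)^[s+1+1+t] c :=
    Finset.prod_congr rfl fun t _ => by rw [show s+1+(t+1) = s+1+1+t from by omega]
  rw [h2, h3, add_zero]
  ring

lemma evL_factor (f : ℕ → F) (c : F) (d : ℕ) (hf : ∀ r, d+1 < r → f r = 0) (A b : F) :
    evL σ (d+2) f A b
      = evL σ (d+1) (quot σ f c d) A (σ b * A - c * b)
        + (f 0 + quot σ f c d 0 * c) * b := by
  set g := quot σ f c d with hg
  simp only [evL_apply, dit_T]
  have hstep : ∀ s, f (s+1) = g s - (⇑σ)^[s+1] c * g (s+1) := by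
    intro s
    rw [hg, quot_rec σ f c d hf s]; ring
  calc ∑ r ∈ Finset.range (d+2), f r * Dit σ A b r
      = (∑ s ∈ Finset.range (d+1), f (s+1) * Dit σ A b (s+1)) + f 0 * b := by
        rw [Finset.sum_range_succ']; rfl
    _ = (∑ s ∈ Finset.range (d+1), (g s * Dit σ A b (s+1)
          - (⇑σ)^[s+1] c * g (s+1) * Dit σ A b (s+1))) + f 0 * b := by
        congr 1
        refine Finset.sum_congr rfl fun s _ => ?_
        rw [hstep s]; ring
    _ = (∑ s ∈ Finset.range (d+1), g s * Dit σ A b (s+1))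
          - (∑ s ∈ Finset.range (d+1), (⇑σ)^[s+1] c * g (s+1) * Dit σ A b (s+1))
          + f 0 * b := by
        rw [Finset.sum_sub_distrib]
    _ = (∑ s ∈ Finset.range (d+1), g s * Dit σ A b (s+1))
          - ((∑ s ∈ Finset.range (d+1), (⇑σ)^[s] c * g s * Dit σ A b s) - c * g 0 * b)
          + f 0 * b := by
        congr 2
        have h3 : ∑ s ∈ Finset.range (d+2), (⇑σ)^[s] c * g s * Dit σ A b s
            = (∑ s ∈ Finset.range (d+1), (⇑σ)^[s+1] c * g (s+1) * Dit σ A b (s+1))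
              + c * g 0 * b := by
          rw [Finset.sum_range_succ']; rfl
        have h4 : ∑ s ∈ Finset.range (d+2), (⇑σ)^[s] c * g s * Dit σ A b s
            = ∑ s ∈ Finset.range (d+1), (⇑σ)^[s] c * g s * Dit σ A b s := by
          rw [Finset.sum_range_succ, hg, quot_supp σ f c d hf (by omega)]
          ring
        rw [← h4, h3]; ring
    _ = (∑ s ∈ Finset.range (d+1), g s * (Dit σ A b (s+1) - (⇑σ)^[s] c * Dit σ A b s))
          + (f 0 + g 0 * c) * b := by
        simp only [mul_sub]
        rw [Finset.sum_sub_distrib]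
        have hBB : ∑ s ∈ Finset.range (d+1), (⇑σ)^[s] c * g s * Dit σ A b s
            = ∑ s ∈ Finset.range (d+1), g s * ((⇑σ)^[s] c * Dit σ A b s) :=
          Finset.sum_congr rfl fun s _ => by ring
        rw [hBB]; ring

section FinDim
variable [Fintype F]

lemma ker_Tmap_rank_le (c A : F) (hA : A ≠ 0) :
    Module.finrank (fixedSubfield σ) (LinearMap.ker (Tmap σ c A)) ≤ 1 := by
  by_cases hbot : LinearMap.ker (Tmap σ c A) = ⊥
  · rw [hbot]; simp
  · obtain ⟨x, hx, hx0⟩ := (Submodule.ne_bot_iff _).1 hbot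
    have hxe : σ x * A = c * x := by
      have h := LinearMap.mem_ker.1 hx
      rw [Tmap_apply] at h
      linear_combination h
    have hσx : σ x ≠ 0 := fun h => hx0 (σ.injective (by rw [h, map_zero]))
    have hc0 : c ≠ 0 := by
      intro hc
      rw [hc, zero_mul] at hxe
      exact (mul_ne_zero hσx hA) hxe
    have hker : LinearMap.ker (Tmap σ c A) ≤
        Submodule.span (fixedSubfield σ) ({x} : Set F) := by
      intro y hy
      have hye : σ y * A = c * y := by
        have h := LinearMap.mem_ker.1 hy
        rw [Tmap_apply] at h
        linear_combination h
      set q : F := y * x⁻¹ with hq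
      have hqfix : σ q = q := by
        rw [hq, map_mul, map_inv₀]
        have h1 : σ y = c * y / A := by rw [eq_div_iff hA]; exact hye
        have h2 : σ x = c * x / A := by rw [eq_div_iff hA]; exact hxe
        rw [h1, h2]
        field_simp
      refine Submodule.mem_span_singleton.2 ⟨⟨q, hqfix⟩, ?_⟩
      show q * x = y
      rw [hq]
      field_simp
    calc Module.finrank (fixedSubfield σ) (LinearMap.ker (Tmap σ c A))
        ≤ Module.finrank (fixedSubfield σ)
            (Submodule.span (fixedSubfield σ) ({x} : Set F)) :=
          Submodule.finrank_mono hker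
      _ = 1 := finrank_span_singleton hx0

omit [Fintype F] in
lemma ker_Tmap_eq_bot (c A β ai : F) (hβ : β ≠ 0) (hc : c = σ β * ai * β⁻¹)
    (hnc : ¬ ∃ e : F, e ≠ 0 ∧ σ e * ai * e⁻¹ = A) :
    LinearMap.ker (Tmap σ c A) = ⊥ := by
  rw [Submodule.eq_bot_iff]
  intro b hb
  by_contra hb0
  apply hnc
  have hbe : σ b * A = c * b := by
    have h := LinearMap.mem_ker.1 hb
    rw [Tmap_apply] at h
    linear_combination h
  have hσb : σ b ≠ 0 := fun h => hb0 (σ.injective (by rw [h, map_zero]))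
  refine ⟨b⁻¹ * β, mul_ne_zero (inv_ne_zero hb0) hβ, ?_⟩
  have h1 : σ (b⁻¹ * β) = (σ b)⁻¹ * σ β := by rw [map_mul, map_inv₀]
  rw [h1]
  have h2 : (b⁻¹ * β)⁻¹ = b * β⁻¹ := by rw [mul_inv, inv_inv]
  rw [h2]
  have h3 : (σ b)⁻¹ * σ β * ai * (b * β⁻¹) = (σ b)⁻¹ * (σ β * ai * β⁻¹) * b := by ring
  rw [h3, ← hc]
  have h4 : (σ b)⁻¹ * c * b = (σ b)⁻¹ * (c * b) := by ring
  rw [h4, ← hbe]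
  field_simp

lemma finrank_comap_le (T : F →ₗ[fixedSubfield σ] F)
    (W : Submodule (fixedSubfield σ) F) :
    Module.finrank (fixedSubfield σ) (W.comap T) ≤
      Module.finrank (fixedSubfield σ) W
        + Module.finrank (fixedSubfield σ) (LinearMap.ker T) := by
  classical
  let T' : (W.comap T) →ₗ[fixedSubfield σ] W := T.restrict (fun x hx => hx)
  have h1 := LinearMap.finrank_range_add_finrank_ker T'
  have h2 : Module.finrank (fixedSubfield σ) (LinearMap.range T')
      ≤ Module.finrank (fixedSubfield σ) W := Submodule.finrank_le _
  have h3 : Module.finrank (fixedSubfield σ) (LinearMap.ker T')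
      ≤ Module.finrank (fixedSubfield σ) (LinearMap.ker T) := by
    have hJmem : ∀ x : LinearMap.ker T', ((x : W.comap T) : F) ∈ LinearMap.ker T := by
      intro x
      have hx : T' (x : W.comap T) = 0 := x.2
      have he : (T' (x : W.comap T) : F) = T ((x : W.comap T) : F) := rfl
      rw [LinearMap.mem_ker, ← he, hx]
      rfl
    let J : LinearMap.ker T' →ₗ[fixedSubfield σ] LinearMap.ker T :=
      { toFun := fun x => ⟨((x : W.comap T) : F), hJmem x⟩
        map_add' := fun x y => rfl
        map_smul' := fun q x => rfl }
    refine LinearMap.finrank_le_finrank_of_injective (f := J) ?_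
    intro x y hxy
    have h5 := congrArg Subtype.val hxy
    exact Subtype.ext (Subtype.ext h5)
  omega

end FinDim

section Key
variable [Fintype F]

lemma key {ℓ : ℕ} (a : Fin ℓ → F) (ha0 : ∀ i, a i ≠ 0)
    (hconj : ∀ i i' : Fin ℓ, i ≠ i' → ¬ ∃ e : F, e ≠ 0 ∧ σ e * a i * e⁻¹ = a i') :
    ∀ (d : ℕ) (f : ℕ → F), (∀ r, d < r → f r = 0) → f d ≠ 0 →
      ∑ i, Module.finrank (fixedSubfield σ)
        (LinearMap.ker (evL σ (d+1) f (a i))) ≤ d := by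
  intro d
  induction d with
  | zero =>
    intro f hs h0
    have hbot : ∀ i, LinearMap.ker (evL σ 1 f (a i)) = ⊥ := by
      intro i
      rw [Submodule.eq_bot_iff]
      intro b hb
      have hb' : f 0 * b = 0 := by
        have h := LinearMap.mem_ker.1 hb
        rw [evL_apply, Finset.sum_range_one] at h
        exact h
      exact (mul_eq_zero.1 hb').resolve_left h0
    simp [hbot]
  | succ d ih =>
    intro f hs h0
    by_cases hall : ∀ i, LinearMap.ker (evL σ (d+1+1) f (a i)) = ⊥
    · refine le_trans (le_of_eq (Finset.sum_eq_zero fun i _ => ?_)) (Nat.zero_le _)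
      rw [hall i]
      simp
    · push_neg at hall
      obtain ⟨i, hi⟩ := hall
      obtain ⟨β, hβmem, hβ0⟩ := (Submodule.ne_bot_iff _).1 hi
      set c := σ β * a i * β⁻¹ with hc
      have hσβ : σ β ≠ 0 := fun hz => hβ0 (σ.injective (by rw [hz, map_zero]))
      have hc0 : c ≠ 0 := by
        rw [hc]
        exact mul_ne_zero (mul_ne_zero hσβ (ha0 i)) (inv_ne_zero hβ0)
      have hsupp : ∀ r, d + 1 < r → f r = 0 := fun r hr => hs r hr
      set g := quot σ f c d with hg
      have hgs : ∀ r, d < r → g r = 0 := fun r hr => quot_supp σ f c d hsupp hr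
      have hgt : g d ≠ 0 := by rw [hg, quot_top σ f c d hsupp]; exact h0
      have hr0 : f 0 + g 0 * c = 0 := by
        have hfac := evL_factor σ f c d hsupp (a i) β
        have hz : σ β * (a i) - c * β = 0 := by
          rw [hc]
          field_simp
          ring
        have hev0 : evL σ (d+2) f (a i) β = 0 := hβmem
        rw [hev0, hz, map_zero, zero_add] at hfac
        have := hfac.symm
        rcases mul_eq_zero.1 this with h | h
        · exact h
        · exact absurd h hβ0
      have hfact : ∀ A : F, evL σ (d+2) f A = (evL σ (d+1) g A).comp (Tmap σ c A) := by
        intro A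
        ext b
        have hfac := evL_factor σ f c d hsupp A b
        rw [hr0, zero_mul, add_zero] at hfac
        rw [LinearMap.comp_apply, Tmap_apply]
        exact hfac
      have hsumle : ∀ j, Module.finrank (fixedSubfield σ)
            (LinearMap.ker (evL σ (d+1+1) f (a j)))
          ≤ Module.finrank (fixedSubfield σ) (LinearMap.ker (evL σ (d+1) g (a j)))
            + Module.finrank (fixedSubfield σ) (LinearMap.ker (Tmap σ c (a j))) := by
        intro j
        have : LinearMap.ker (evL σ (d+1+1) f (a j))
            = (LinearMap.ker (evL σ (d+1) g (a j))).comap (Tmap σ c (a j)) := by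
          rw [show d+1+1 = d+2 from rfl, hfact (a j), LinearMap.ker_comp]
        rw [this]
        exact finrank_comap_le σ _ _
      have hT : ∑ j, Module.finrank (fixedSubfield σ)
          (LinearMap.ker (Tmap σ c (a j))) ≤ 1 := by
        have hTj : ∀ j ∈ Finset.univ, Module.finrank (fixedSubfield σ)
            (LinearMap.ker (Tmap σ c (a j))) ≤ if j = i then 1 else 0 := by
          intro j _
          by_cases hji : j = i
          · subst hji
            simpa using ker_Tmap_rank_le σ c (a j) (ha0 j)
          · rw [if_neg hji,
              ker_Tmap_eq_bot σ c (a j) β (a i) hβ0 hc (hconj i j (fun h => hji h.symm))]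
            simp
        calc ∑ j, Module.finrank (fixedSubfield σ) (LinearMap.ker (Tmap σ c (a j)))
            ≤ ∑ j, if j = i then 1 else 0 := Finset.sum_le_sum hTj
          _ = 1 := by simp
      calc ∑ j, Module.finrank (fixedSubfield σ)
            (LinearMap.ker (evL σ (d+1+1) f (a j)))
          ≤ ∑ j, (Module.finrank (fixedSubfield σ)
                (LinearMap.ker (evL σ (d+1) g (a j)))
              + Module.finrank (fixedSubfield σ)
                (LinearMap.ker (Tmap σ c (a j)))) :=
            Finset.sum_le_sum (fun j _ => hsumle j)
        _ = (∑ j, Module.finrank (fixedSubfield σ)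
                (LinearMap.ker (evL σ (d+1) g (a j))))
              + ∑ j, Module.finrank (fixedSubfield σ)
                (LinearMap.ker (Tmap σ c (a j))) := Finset.sum_add_distrib
        _ ≤ d + 1 := add_le_add (ih g hgs hgt) hT

end Key

noncomputable def opev' {F : Type*} [Field F] (σ : F ≃+* F) (f : Polynomial F)
    (a b : F) : F :=
  ∑ r ∈ f.support, f.coeff r * Dit σ a b r

lemma opev'_eq_evL (f : Polynomial F) (A b : F) (n : ℕ) (hn : f.natDegree < n) :
    opev' σ f A b = evL σ n f.coeff A b := by
  rw [opev', evL_apply]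
  apply Finset.sum_subset
  · intro r hr
    exact Finset.mem_range.2 (lt_of_le_of_lt (Polynomial.le_natDegree_of_mem_supp r hr) hn)
  · intro x _ hxs
    rw [Polynomial.notMem_support_iff.1 hxs, zero_mul]

lemma opev'_zero (A b : F) : opev' σ (0 : Polynomial F) A b = 0 := by
  simp [opev']

lemma opev'_sub (f1 f2 : Polynomial F) (A b : F) :
    opev' σ (f1 - f2) A b = opev' σ f1 A b - opev' σ f2 A b := by
  set n := max (max f1.natDegree f2.natDegree) (f1 - f2).natDegree + 1 with hn
  have h1 : f1.natDegree < n := by omega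
  have h2 : f2.natDegree < n := by omega
  have h3 : (f1 - f2).natDegree < n := by omega
  rw [opev'_eq_evL σ f1 A b n h1, opev'_eq_evL σ f2 A b n h2,
    opev'_eq_evL σ (f1 - f2) A b n h3]
  simp only [evL_apply, Polynomial.coeff_sub, sub_mul]
  rw [Finset.sum_sub_distrib]

noncomputable def comb {M : Type*} [AddCommGroup M] [Module (fixedSubfield σ) M]
    {n : ℕ} (v : Fin n → M) : (Fin n → fixedSubfield σ) →ₗ[fixedSubfield σ] M where
  toFun l := ∑ j, l j • v j
  map_add' x y := by
    simp only [Pi.add_apply, add_smul]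
    rw [Finset.sum_add_distrib]
  map_smul' q x := by
    simp only [Pi.smul_apply, RingHom.id_apply, smul_eq_mul, mul_smul]
    rw [Finset.smul_sum]

@[simp] lemma comb_apply {M : Type*} [AddCommGroup M] [Module (fixedSubfield σ) M]
    {n : ℕ} (v : Fin n → M) (l : Fin n → fixedSubfield σ) :
    comb σ v l = ∑ j, l j • v j := rfl

lemma range_comb {M : Type*} [AddCommGroup M] [Module (fixedSubfield σ) M]
    {n : ℕ} (v : Fin n → M) :
    LinearMap.range (comb σ v) = Submodule.span (fixedSubfield σ) (Set.range v) := by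
  apply le_antisymm
  · rintro x ⟨l, rfl⟩
    rw [comb_apply]
    exact Submodule.sum_mem _ fun j _ =>
      Submodule.smul_mem _ _ (Submodule.subset_span (Set.mem_range_self j))
  · rw [Submodule.span_le]
    rintro x ⟨j, rfl⟩
    show v j ∈ LinearMap.range (comb σ v)
    refine LinearMap.mem_range.mpr ⟨Pi.single j 1, ?_⟩
    rw [comb_apply]
    rw [Finset.sum_eq_single j]
    · simp
    · intro b _ hb
      rw [Pi.single_eq_of_ne hb, zero_smul]
    · intro hj
      exact absurd (Finset.mem_univ j) hj

section Gamma
variable [Fintype F]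

lemma gamma_indep (γ : F) (hprim : ∀ x : F, x ≠ 0 → ∃ j : ℕ, x = γ ^ j) :
    LinearIndependent (fixedSubfield σ)
      (fun e : Fin (Module.finrank (fixedSubfield σ) F) => γ ^ (e : ℕ)) := by
  have hint : IsIntegral (fixedSubfield σ) γ := IsIntegral.of_finite _ γ
  have htop : IntermediateField.adjoin (fixedSubfield σ) ({γ} : Set F) = ⊤ := by
    rw [eq_top_iff]
    intro x _
    by_cases hx : x = 0
    · rw [hx]; exact zero_mem _
    · obtain ⟨j, rfl⟩ := hprim x hx
      exact pow_mem (IntermediateField.mem_adjoin_simple_self _ γ) j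
  have hdeg : (minpoly (fixedSubfield σ) γ).natDegree
      = Module.finrank (fixedSubfield σ) F := by
    have h1 := IntermediateField.adjoin.finrank hint
    rw [htop] at h1
    rw [← h1, IntermediateField.finrank_top']
  rw [← hdeg]
  exact linearIndependent_pow γ

lemma gamma_block_indep (γ : F) (hprim : ∀ x : F, x ≠ 0 → ∃ j : ℕ, x = γ ^ j)
    {h n : ℕ} (hm : h * n ≤ Module.finrank (fixedSubfield σ) F) :
    LinearIndependent (fixedSubfield σ)
      (fun p : Fin n × Fin h => γ ^ ((p.1 : ℕ) * h + (p.2 : ℕ))) := by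
  have hbase := gamma_indep σ γ hprim
  have hlt : ∀ p : Fin n × Fin h,
      (p.1 : ℕ) * h + (p.2 : ℕ) < Module.finrank (fixedSubfield σ) F := by
    intro p
    have h1 : (p.1 : ℕ) + 1 ≤ n := p.1.2
    have h2 : (p.2 : ℕ) < h := p.2.2
    calc (p.1 : ℕ) * h + (p.2 : ℕ) < ((p.1 : ℕ) + 1) * h := by
          rw [add_mul, one_mul]; omega
      _ ≤ n * h := Nat.mul_le_mul_right _ h1
      _ = h * n := Nat.mul_comm _ _
      _ ≤ _ := hm
  set emb : Fin n × Fin h → Fin (Module.finrank (fixedSubfield σ) F) :=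
    fun p => ⟨(p.1 : ℕ) * h + (p.2 : ℕ), hlt p⟩ with hemb
  have hinj : Function.Injective emb := by
    intro p q hpq
    have hval : (p.1 : ℕ) * h + (p.2 : ℕ) = (q.1 : ℕ) * h + (q.2 : ℕ) :=
      congrArg Fin.val hpq
    have h2p : (p.2 : ℕ) < h := p.2.2
    have h2q : (q.2 : ℕ) < h := q.2.2
    have hmod : (p.2 : ℕ) = (q.2 : ℕ) := by
      have := congrArg (· % h) hval
      simpa [Nat.mul_add_mod, Nat.add_mul_mod_self_left, Nat.mod_eq_of_lt h2p,
        Nat.mod_eq_of_lt h2q, Nat.add_comm, Nat.add_mul_mod_self_right] using this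
    have hdiv : (p.1 : ℕ) = (q.1 : ℕ) := by
      have hh : 0 < h := by omega
      have : (p.1 : ℕ) * h = (q.1 : ℕ) * h := by omega
      exact Nat.eq_of_mul_eq_mul_right hh this
    exact Prod.ext (Fin.ext hdiv) (Fin.ext hmod)
  have := hbase.comp emb hinj
  convert this using 1
  rfl

end Gamma

noncomputable def colRank' {F : Type*} [Field F] (σ : F ≃+* F) {h N : ℕ}
    (M : Matrix (Fin h) (Fin N) F) : ℕ :=
  Module.finrank (fixedSubfield σ)
    (Submodule.span (fixedSubfield σ)
      (Set.range fun j : Fin N => fun r : Fin h => M r j))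

section Weight
variable [Fintype F]

lemma block_bound {ℓ h k : ℕ} (hh : 0 < h)
    (Nv : Fin ℓ → ℕ)
    (hnm : ∀ i, h * Nv i ≤ Module.finrank (fixedSubfield σ) F)
    (γ : F) (hprim : ∀ x : F, x ≠ 0 → ∃ j : ℕ, x = γ ^ j)
    (a : Fin ℓ → F)
    (f : Polynomial F) (hdk : f.natDegree < k)
    (M : ∀ i, Matrix (Fin h) (Fin (Nv i)) F)
    (hM : ∀ i r c, M i r c = opev' σ f (a i) (γ ^ ((c : ℕ) * h + (r : ℕ))))
    (i : Fin ℓ) :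
    ∃ δ : ℕ, colRank' σ (M i) + δ = Nv i ∧
      h * δ ≤ Module.finrank (fixedSubfield σ)
        (LinearMap.ker (evL σ (f.natDegree + 1) f.coeff (a i))) := by
  classical
  set K := fixedSubfield σ
  set d := f.natDegree with hd
  set cols : Fin (Nv i) → (Fin h → F) := fun c r => M i r c with hcols
  set φ := comb σ cols with hφ
  refine ⟨Module.finrank K (LinearMap.ker φ), ?_, ?_⟩
  · have h1 : colRank' σ (M i) = Module.finrank K (LinearMap.range φ) := by
      rw [colRank', hφ, range_comb]
    rw [h1]
    have h2 := LinearMap.finrank_range_add_finrank_ker φ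
    rw [Module.finrank_pi] at h2
    simpa using h2
  · -- build Θ
    set w : Fin (Nv i) → F := fun c => γ ^ ((c : ℕ) * h) with hw
    set B := comb σ w with hB
    set Z := LinearMap.ker (evL σ (d + 1) f.coeff (a i)) with hZ
    set Θ : (Fin h → LinearMap.ker φ) →ₗ[K] F :=
      ∑ r : Fin h, (LinearMap.mulLeft K (γ ^ (r : ℕ))).comp
        (B.comp ((LinearMap.ker φ).subtype.comp (LinearMap.proj r))) with hΘ
    have hΘapp : ∀ v, Θ v = ∑ r : Fin h, γ ^ (r : ℕ) * (B ((v r) : Fin (Nv i) → K)) := by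
      intro v
      rw [hΘ]
      rw [LinearMap.sum_apply]
      rfl
    -- each term lands in Z
    have hterm : ∀ (l : Fin (Nv i) → K), φ l = 0 → ∀ r : Fin h,
        γ ^ (r : ℕ) * B l ∈ Z := by
      intro l hl r
      have hrw : γ ^ (r : ℕ) * B l = ∑ c : Fin (Nv i), l c • γ ^ ((c : ℕ) * h + (r : ℕ)) := by
        rw [hB, comb_apply, Finset.mul_sum]
        refine Finset.sum_congr rfl fun c _ => ?_
        have : (l c : F) • (γ ^ ((c : ℕ) * h) : F) = (l c : F) * γ ^ ((c : ℕ) * h) := rfl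
        rw [hw]
        show γ ^ (r : ℕ) * (l c • γ ^ ((c : ℕ) * h)) = l c • γ ^ ((c : ℕ) * h + (r : ℕ))
        have hsm : ∀ (q : K) (x : F), q • x = (q : F) * x := fun _ _ => rfl
        rw [hsm, hsm, pow_add]
        ring
      rw [hZ, LinearMap.mem_ker, hrw, map_sum]
      have hent : ∀ c : Fin (Nv i),
          evL σ (d+1) f.coeff (a i) (l c • γ ^ ((c : ℕ) * h + (r : ℕ)))
            = l c • (M i r c) := by
        intro c
        rw [map_smul, hM i r c, opev'_eq_evL σ f (a i) _ (d+1) (by omega)]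
      rw [Finset.sum_congr rfl fun c _ => hent c]
      have := congrFun hl r
      have hφl : (φ l) r = ∑ c : Fin (Nv i), l c • (M i r c) := by
        rw [hφ, comb_apply]
        rw [Finset.sum_apply]
        rfl
      rw [← hφl, this]
      rfl
    have hrange : LinearMap.range Θ ≤ Z := by
      rintro x ⟨v, rfl⟩
      rw [hΘapp]
      exact Submodule.sum_mem _ fun r _ => hterm ((v r) : Fin (Nv i) → K) (v r).2 r
    have hinj : Function.Injective Θ := by
      rw [← LinearMap.ker_eq_bot]
      rw [LinearMap.ker_eq_bot']
      intro v hv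
      rw [hΘapp] at hv
      have hv2 : ∑ p : Fin (Nv i) × Fin h,
          ((v p.2 : Fin (Nv i) → K) p.1) • γ ^ ((p.1 : ℕ) * h + (p.2 : ℕ)) = 0 := by
        rw [Fintype.sum_prod_type_right]
        rw [← hv]
        refine Finset.sum_congr rfl fun r _ => ?_
        rw [hB, comb_apply, Finset.mul_sum]
        refine Finset.sum_congr rfl fun c _ => ?_
        have hsm : ∀ (q : K) (x : F), q • x = (q : F) * x := fun _ _ => rfl
        rw [hsm, hsm, hw, pow_add]
        ring
      have hli := gamma_block_indep σ γ hprim (h := h) (n := Nv i) (hnm i)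
      have hz := Fintype.linearIndependent_iff.1 hli
        (fun p => (v p.2 : Fin (Nv i) → K) p.1) hv2
      funext r
      have : (v r : Fin (Nv i) → K) = 0 := by
        funext c
        exact hz (c, r)
      exact Subtype.ext this
    have hrankeq : Module.finrank K (Fin h → LinearMap.ker φ)
        = Module.finrank K (LinearMap.range Θ) :=
      (LinearMap.finrank_range_of_inj hinj).symm
    have hpi : Module.finrank K (Fin h → LinearMap.ker φ)
        = h * Module.finrank K (LinearMap.ker φ) := by
      rw [Module.finrank_pi_fintype]
      simp [Finset.sum_const, mul_comm]
    calc h * Module.finrank K (LinearMap.ker φ)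
        = Module.finrank K (LinearMap.range Θ) := by rw [← hpi, hrankeq]
      _ ≤ Module.finrank K Z := Submodule.finrank_mono hrange

lemma weight_lb {ℓ h k : ℕ} (hh : 0 < h) (hk : 0 < k)
    (Nv : Fin ℓ → ℕ) (hkN : k ≤ h * ∑ i, Nv i) (hdvd : h ∣ k)
    (hnm : ∀ i, h * Nv i ≤ Module.finrank (fixedSubfield σ) F)
    (γ : F) (hprim : ∀ x : F, x ≠ 0 → ∃ j : ℕ, x = γ ^ j)
    (a : Fin ℓ → F) (ha0 : ∀ i, a i ≠ 0)
    (hconj : ∀ i i' : Fin ℓ, i ≠ i' → ¬ ∃ e : F, e ≠ 0 ∧ σ e * a i * e⁻¹ = a i')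
    (f : Polynomial F) (hf0 : f ≠ 0) (hdk : f.natDegree < k)
    (M : ∀ i, Matrix (Fin h) (Fin (Nv i)) F)
    (hM : ∀ i r c, M i r c = opev' σ f (a i) (γ ^ ((c : ℕ) * h + (r : ℕ)))) :
    (∑ i, Nv i) - k / h + 1 ≤ ∑ i, colRank' σ (M i) := by
  classical
  set K := fixedSubfield σ
  set d := f.natDegree with hd
  have hkey : ∑ i, Module.finrank K
      (LinearMap.ker (evL σ (d+1) f.coeff (a i))) ≤ d := by
    refine key σ a ha0 hconj d f.coeff
      (fun r hr => Polynomial.coeff_eq_zero_of_natDegree_lt hr) ?_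
    exact mt Polynomial.leadingCoeff_eq_zero.mp hf0
  have hblocks := fun i => block_bound σ hh Nv hnm γ hprim a f hdk M hM i
  choose δ hδ1 hδ2 using hblocks
  have hsum1 : (∑ i, colRank' σ (M i)) + (∑ i, δ i) = ∑ i, Nv i := by
    rw [← Finset.sum_add_distrib]
    exact Finset.sum_congr rfl fun i _ => hδ1 i
  have hsum2 : h * (∑ i, δ i) ≤ d := by
    calc h * (∑ i, δ i) = ∑ i, h * δ i := Finset.mul_sum _ _ _
      _ ≤ ∑ i, Module.finrank K (LinearMap.ker (evL σ (d+1) f.coeff (a i))) :=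
          Finset.sum_le_sum fun i _ => hδ2 i
      _ ≤ d := hkey
  set t := k / h with ht
  have hth : h * t = k := Nat.mul_div_cancel' hdvd
  have hδt : (∑ i, δ i) < t := by
    have h1 : h * (∑ i, δ i) < h * t := by omega
    exact lt_of_mul_lt_mul_left h1 (Nat.zero_le h)
  have htN : t ≤ ∑ i, Nv i := by
    have h1 : h * t ≤ h * ∑ i, Nv i := by omega
    exact Nat.le_of_mul_le_mul_left h1 hh
  omega

end Weight

end FLRSAux

/-- A folded linearized Reed–Solomon code with the same folding parameter `h` for all
blocks and `h ∣ k` has minimum sum-rank distance `N − k/h + 1`, i.e. it is MSRD. -/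
theorem stmt_8 (F : Type*) [Field F] [Fintype F] (σ : F ≃+* F)
    (ℓ h k : ℕ) (hℓ : 0 < ℓ) (hh : 0 < h) (hk : 0 < k)
    (Nv : Fin ℓ → ℕ) (hNpos : ∀ i, 0 < Nv i)
    (hkN : k ≤ h * ∑ i, Nv i) (hdvd : h ∣ k)
    (hNh : ∀ i, Nv i ≤ h)
    (hnm : ∀ i, h * Nv i ≤ Module.finrank (fixedSubfield σ) F)
    (γ : F) (hγ0 : γ ≠ 0) (hprim : ∀ x : F, x ≠ 0 → ∃ j : ℕ, x = γ ^ j)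
    (a : Fin ℓ → F) (ha0 : ∀ i, a i ≠ 0)
    (hconj : ∀ i i' : Fin ℓ, i ≠ i' →
      ¬ ∃ c : F, c ≠ 0 ∧ σ c * a i * c⁻¹ = a i') :
    IsLeast
      {w : ℕ |
        ∃ X ∈ {X : ∀ i : Fin ℓ, Matrix (Fin h) (Fin (Nv i)) F |
            ∃ f : Polynomial F, f.degree < (k : ℕ) ∧
              ∀ i r c, X i r c = opev σ f (a i) (γ ^ (c.1 * h + r.1))},
        ∃ Y ∈ {X : ∀ i : Fin ℓ, Matrix (Fin h) (Fin (Nv i)) F |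
            ∃ f : Polynomial F, f.degree < (k : ℕ) ∧
              ∀ i r c, X i r c = opev σ f (a i) (γ ^ (c.1 * h + r.1))},
        X ≠ Y ∧ w = ∑ i, colRank σ (X i - Y i)}
      ((∑ i, Nv i) - k / h + 1) := by
  classical
  have hcrank : ∀ {h' N' : ℕ} (M : Matrix (Fin h') (Fin N') F),
      colRank σ M = FLRSAux.colRank' σ M := fun _ => rfl
  have hopev' : ∀ (f : Polynomial F) (A b : F),
      opev σ f A b = FLRSAux.opev' σ f A b := fun _ _ _ => rfl
  constructor
  · -- membership: construct a minimum-weight codeword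
    set t := k / h with ht
    have hth : h * t = k := Nat.mul_div_cancel' hdvd
    have ht1 : 1 ≤ t := by
      rcases Nat.eq_zero_or_pos t with h0 | h1
      · rw [h0, mul_zero] at hth; omega
      · exact h1
    have htN : t ≤ ∑ i, Nv i := Nat.le_of_mul_le_mul_left (by omega) hh
    obtain ⟨T, hTsub, hTcard⟩ := Finset.exists_subset_card_eq
      (s := (Finset.univ : Finset (Σ i : Fin ℓ, Fin (Nv i)))) (n := t - 1)
      (by rw [Finset.card_univ, Fintype.card_sigma]; simp only [Fintype.card_fin]; omega)
    set Ev : (Fin k → F) →ₗ[F] ((↥T × Fin h) → F) :=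
      { toFun := fun u p => ∑ s : Fin k,
          u s * Dit σ (a p.1.1.1) (γ ^ ((p.1.1.2 : ℕ) * h + (p.2 : ℕ))) (s : ℕ)
        map_add' := fun u v => by
          funext p
          simp only [Pi.add_apply, add_mul]
          rw [Finset.sum_add_distrib]
        map_smul' := fun q u => by
          funext p
          simp only [Pi.smul_apply, smul_eq_mul, RingHom.id_apply]
          rw [Finset.mul_sum]
          exact Finset.sum_congr rfl fun s _ => (mul_assoc _ _ _) } with hEv
    have hker : LinearMap.ker Ev ≠ ⊥ := by
      intro hbot
      have hinj : Function.Injective Ev := LinearMap.ker_eq_bot.1 hbot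
      have hle := LinearMap.finrank_le_finrank_of_injective hinj
      rw [Module.finrank_pi, Module.finrank_pi, Fintype.card_fin, Fintype.card_prod,
        Fintype.card_coe, hTcard, Fintype.card_fin] at hle
      have h2 : (t - 1) * h + h = t * h := by
        have he : t - 1 + 1 = t := by omega
        calc (t - 1) * h + h = (t - 1 + 1) * h := by ring
          _ = t * h := by rw [he]
      have h3 : t * h = k := by rw [mul_comm]; exact hth
      omega
    obtain ⟨u, hu_mem, hu0⟩ := (Submodule.ne_bot_iff _).1 hker
    have hu : Ev u = 0 := hu_mem
    set u' : ℕ → F := fun s => if hs : s < k then u ⟨s, hs⟩ else 0 with hu'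
    set f : Polynomial F := ∑ s ∈ Finset.range k, Polynomial.monomial s (u' s) with hf
    have hcoeff : ∀ j, f.coeff j = u' j := by
      intro j
      rw [hf, Polynomial.finset_sum_coeff]
      simp only [Polynomial.coeff_monomial]
      rw [Finset.sum_ite_eq' (Finset.range k) j u']
      by_cases hj : j < k
      · rw [if_pos (Finset.mem_range.2 hj)]
      · rw [if_neg (fun hmem => hj (Finset.mem_range.1 hmem)), hu']
        simp [hj]
    obtain ⟨s0, hs0⟩ := Function.ne_iff.mp hu0
    have hs0' : u s0 ≠ 0 := by simpa using hs0
    have hf0 : f ≠ 0 := by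
      intro hz
      apply hs0'
      have hcf := hcoeff (s0 : ℕ)
      rw [hz, Polynomial.coeff_zero] at hcf
      rw [hu'] at hcf
      simp only [s0.isLt, dif_pos, Fin.eta] at hcf
      exact hcf.symm
    have hdeg : f.degree < (k : ℕ) := by
      rw [hf]
      apply lt_of_le_of_lt (Polynomial.degree_sum_le _ _)
      refine (Finset.sup_lt_iff (by exact_mod_cast WithBot.bot_lt_coe k : (⊥ : WithBot ℕ) < ((k : ℕ) : WithBot ℕ))).2 ?_
      intro s hs
      refine lt_of_le_of_lt (Polynomial.degree_monomial_le s _) ?_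
      exact_mod_cast Finset.mem_range.1 hs
    have hdk : f.natDegree < k := (Polynomial.natDegree_lt_iff_degree_lt hf0).2 hdeg
    have hopev : ∀ A b : F, opev σ f A b = ∑ s : Fin k, u s * Dit σ A b (s : ℕ) := by
      intro A b
      rw [hopev' f A b, FLRSAux.opev'_eq_evL σ f A b k hdk, FLRSAux.evL_apply,
        ← Fin.sum_univ_eq_sum_range]
      refine Finset.sum_congr rfl fun s _ => ?_
      rw [hcoeff, hu']
      simp only [s.isLt, dif_pos, Fin.eta]
    set X : ∀ i : Fin ℓ, Matrix (Fin h) (Fin (Nv i)) F :=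
      fun i => fun r c => opev σ f (a i) (γ ^ ((c : ℕ) * h + (r : ℕ))) with hX
    set Y : ∀ i : Fin ℓ, Matrix (Fin h) (Fin (Nv i)) F := fun i => 0 with hY
    have hXmem : ∃ g : Polynomial F, g.degree < (k : ℕ) ∧
        ∀ i r c, X i r c = opev σ g (a i) (γ ^ (c.1 * h + r.1)) :=
      ⟨f, hdeg, fun i r c => rfl⟩
    have hYmem : ∃ g : Polynomial F, g.degree < (k : ℕ) ∧
        ∀ i r c, Y i r c = opev σ g (a i) (γ ^ (c.1 * h + r.1)) := by
      refine ⟨0, by rw [Polynomial.degree_zero]; exact_mod_cast WithBot.bot_lt_coe k, fun i r c => ?_⟩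
      rw [hY]
      show (0 : F) = opev σ 0 (a i) _
      rw [hopev' (0 : Polynomial F), FLRSAux.opev'_zero]
    have hXY : X ≠ Y := by
      intro hEq
      have hzero : ∀ (i : Fin ℓ) (r : Fin h) (c : Fin (Nv i)),
          opev σ f (a i) (γ ^ ((c : ℕ) * h + (r : ℕ))) = 0 := by
        intro i r c
        have h1 := congrFun (congrFun (congrFun hEq i) r) c
        simpa [hX, hY] using h1
      set d := f.natDegree with hd
      have hkey := FLRSAux.key σ a ha0 hconj d f.coeff
        (fun r hr => Polynomial.coeff_eq_zero_of_natDegree_lt hr)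
        (mt Polynomial.leadingCoeff_eq_zero.mp hf0)
      have hge : ∀ i, h * Nv i ≤ Module.finrank (fixedSubfield σ)
          (LinearMap.ker (FLRSAux.evL σ (d+1) f.coeff (a i))) := by
        intro i
        have hli := FLRSAux.gamma_block_indep σ γ hprim (h := h) (n := Nv i) (hnm i)
        have hsp : Submodule.span (fixedSubfield σ)
            (Set.range fun p : Fin (Nv i) × Fin h => γ ^ ((p.1 : ℕ) * h + (p.2 : ℕ)))
              ≤ LinearMap.ker (FLRSAux.evL σ (d+1) f.coeff (a i)) := by
          rw [Submodule.span_le]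
          rintro x ⟨p, rfl⟩
          show _ ∈ LinearMap.ker (FLRSAux.evL σ (d+1) f.coeff (a i))
          rw [LinearMap.mem_ker,
            ← FLRSAux.opev'_eq_evL σ f (a i) _ (d+1) (by omega), ← hopev' f (a i)]
          exact hzero i p.2 p.1
        have hm := Submodule.finrank_mono hsp
        rw [finrank_span_eq_card hli] at hm
        simpa [Fintype.card_prod, Fintype.card_fin, mul_comm] using hm
      have hsum : h * (∑ i, Nv i) ≤ d := by
        calc h * (∑ i, Nv i) = ∑ i, h * Nv i := Finset.mul_sum _ _ _
          _ ≤ ∑ i, Module.finrank (fixedSubfield σ)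
              (LinearMap.ker (FLRSAux.evL σ (d+1) f.coeff (a i))) :=
            Finset.sum_le_sum fun i _ => hge i
          _ ≤ d := hkey
      omega
    -- the zero columns
    set Si : ∀ i : Fin ℓ, Finset (Fin (Nv i)) :=
      fun i => Finset.univ.filter (fun c => (⟨i, c⟩ : Σ i, Fin (Nv i)) ∈ T) with hSi
    have hSicard : ∑ i, (Si i).card = t - 1 := by
      rw [← hTcard,
        Finset.card_eq_sum_card_fiberwise (f := Sigma.fst)
          (t := Finset.univ) (fun x _ => Finset.mem_univ _)]
      refine Finset.sum_congr rfl fun i _ => ?_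
      refine Finset.card_bij (fun c _ => (⟨i, c⟩ : Σ i, Fin (Nv i))) ?_ ?_ ?_
      · intro c hc
        rw [Finset.mem_filter]
        exact ⟨(Finset.mem_filter.1 hc).2, rfl⟩
      · intro c1 h1 c2 h2 he
        exact eq_of_heq (Sigma.mk.inj_iff.1 he).2
      · rintro ⟨i', c⟩ hs
        rw [Finset.mem_filter] at hs
        obtain ⟨hsT, hi'⟩ := hs
        subst hi'
        exact ⟨c, Finset.mem_filter.2 ⟨Finset.mem_univ _, hsT⟩, rfl⟩
    have hcolzero : ∀ (i : Fin ℓ) (c : Fin (Nv i)), c ∈ Si i →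
        ∀ r : Fin h, X i r c = 0 := by
      intro i c hc r
      have hT' : (⟨i, c⟩ : Σ i, Fin (Nv i)) ∈ T := (Finset.mem_filter.1 hc).2
      have h0 : (∑ s : Fin k,
          u s * Dit σ (a i) (γ ^ ((c : ℕ) * h + (r : ℕ))) (s : ℕ)) = 0 :=
        congrFun hu (⟨⟨⟨i, c⟩, hT'⟩, r⟩ : ↥T × Fin h)
      rw [hX]
      show opev σ f (a i) (γ ^ ((c : ℕ) * h + (r : ℕ))) = 0
      rw [hopev]
      exact h0
    have hup : ∀ i, colRank σ (X i) ≤ Nv i - (Si i).card := by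
      intro i
      set cols : Fin (Nv i) → (Fin h → F) := fun c r => X i r c with hcols
      have hspan : Submodule.span (fixedSubfield σ) (Set.range cols)
          ≤ Submodule.span (fixedSubfield σ)
            (((Finset.univ \ Si i).image cols : Finset (Fin h → F)) : Set (Fin h → F)) := by
        rw [Submodule.span_le]
        rintro x ⟨c, rfl⟩
        by_cases hc : c ∈ Si i
        · have hz : cols c = 0 := funext (fun r => hcolzero i c hc r)
          rw [hz]
          exact Submodule.zero_mem _
        · apply Submodule.subset_span
          rw [Finset.coe_image]
          exact Set.mem_image_of_mem _ (by simp [hc])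
      calc colRank σ (X i)
          ≤ Module.finrank (fixedSubfield σ) (Submodule.span (fixedSubfield σ)
              (((Finset.univ \ Si i).image cols : Finset (Fin h → F)) : Set (Fin h → F))) :=
            Submodule.finrank_mono hspan
        _ ≤ ((Finset.univ \ Si i).image cols).card := finrank_span_finset_le_card _
        _ ≤ (Finset.univ \ Si i).card := Finset.card_image_le
        _ = Nv i - (Si i).card := by
            rw [Finset.card_sdiff_of_subset (Finset.subset_univ _), Finset.card_univ, Fintype.card_fin]
    have hlow : (∑ i, Nv i) - t + 1 ≤ ∑ i, colRank σ (X i) := by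
      have := FLRSAux.weight_lb σ hh hk Nv hkN hdvd hnm γ hprim a ha0 hconj f hf0 hdk
        X (fun i r c => rfl)
      rw [← ht] at this
      calc (∑ i, Nv i) - t + 1 ≤ ∑ i, FLRSAux.colRank' σ (X i) := this
        _ = ∑ i, colRank σ (X i) := Finset.sum_congr rfl fun i _ => (hcrank (X i)).symm
    have hupS : ∑ i, colRank σ (X i) ≤ (∑ i, Nv i) - (t - 1) := by
      have hle : ∀ i, (Si i).card ≤ Nv i := by
        intro i
        calc (Si i).card ≤ (Finset.univ : Finset (Fin (Nv i))).card :=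
              Finset.card_le_card (Finset.subset_univ _)
          _ = Nv i := by rw [Finset.card_univ, Fintype.card_fin]
      have hsub : (∑ i, (Nv i - (Si i).card)) + ∑ i, (Si i).card = ∑ i, Nv i := by
        rw [← Finset.sum_add_distrib]
        exact Finset.sum_congr rfl fun i _ => Nat.sub_add_cancel (hle i)
      calc ∑ i, colRank σ (X i) ≤ ∑ i, (Nv i - (Si i).card) :=
            Finset.sum_le_sum fun i _ => hup i
        _ ≤ (∑ i, Nv i) - (t - 1) := by omega
    refine ⟨X, hXmem, Y, hYmem, hXY, ?_⟩
    have hsub0 : ∀ i, X i - Y i = X i := fun i => by rw [hY]; exact sub_zero _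
    have : ∑ i, colRank σ (X i - Y i) = ∑ i, colRank σ (X i) :=
      Finset.sum_congr rfl fun i _ => by rw [hsub0 i]
    rw [this]
    omega
  · -- lower bound
    rintro w ⟨X, ⟨f1, hdf1, hXe⟩, Y, ⟨f2, hdf2, hYe⟩, hXY, rfl⟩
    set fd := f1 - f2 with hfd
    have hfd0 : fd ≠ 0 := by
      intro hz
      apply hXY
      have hfe : f1 = f2 := by rwa [sub_eq_zero] at hz
      funext i
      ext r c
      rw [hXe, hYe, hfe]
    have hdeg : fd.degree < (k : ℕ) :=
      lt_of_le_of_lt (Polynomial.degree_sub_le f1 f2) (max_lt hdf1 hdf2)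
    have hdk : fd.natDegree < k := (Polynomial.natDegree_lt_iff_degree_lt hfd0).2 hdeg
    have hres := FLRSAux.weight_lb σ hh hk Nv hkN hdvd hnm γ hprim a ha0 hconj fd hfd0 hdk
      (fun i => X i - Y i) ?_
    · calc (∑ i, Nv i) - k / h + 1 ≤ ∑ i, FLRSAux.colRank' σ (X i - Y i) := hres
        _ = ∑ i, colRank σ (X i - Y i) :=
          Finset.sum_congr rfl fun i _ => (hcrank (X i - Y i)).symm
    · intro i r c
      show (X i - Y i) r c = FLRSAux.opev' σ fd (a i) (γ ^ ((c : ℕ) * h + (r : ℕ)))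
      rw [Matrix.sub_apply, hXe i r c, hYe i r c, hfd, FLRSAux.opev'_sub,
        ← hopev' f1, ← hopev' f2]
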